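/- Let 2 ≤ K ≤ 7. Then the supremum of 2K g₁ + K g₃ over all (g₁,g₂,g₃) ∈ ℝ³ such that the (1+2K)×(1+2K) matrix G(g₁,g₂,g₃) = [[1, g₁𝟙_Kᵀ, g₁𝟙_Kᵀ],[g₁𝟙_K, I_K + g₂(J_K − I_K), g₃ I_K],[g₁𝟙_K, g₃ I_K, I_K + g₂(J_K − I_K)]] is positive semidefinite equals K + 2√K. (Hence the level-1 NPA value of the no-cloning game for the Clifford encryption scheme is 1/4 + (K + 2√K)/(4K) = 1/2 + 1/(2√K) for K ≤ 7.) -/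

import Mathlib

open Matrix

/-- The `K × K` all-ones matrix. -/
def allOnes (K : ℕ) : Matrix (Fin K) (Fin K) ℝ := Matrix.of fun _ _ => 1

/-- The symmetry-reduced level-1 NPA Gram matrix
`G(g₁,g₂,g₃) = [[1, g₁𝟙ᵀ, g₁𝟙ᵀ],[g₁𝟙, I + g₂(J−I), g₃I],[g₁𝟙, g₃I, I + g₂(J−I)]]`. -/
def npaGram (K : ℕ) (g₁ g₂ g₃ : ℝ) :
    Matrix (Unit ⊕ (Fin K ⊕ Fin K)) (Unit ⊕ (Fin K ⊕ Fin K)) ℝ :=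
  Matrix.fromBlocks
    (Matrix.of fun _ _ => 1)
    (Matrix.of fun _ _ => g₁)
    (Matrix.of fun _ _ => g₁)
    (Matrix.fromBlocks
      (1 + g₂ • (allOnes K - 1)) (g₃ • (1 : Matrix (Fin K) (Fin K) ℝ))
      (g₃ • (1 : Matrix (Fin K) (Fin K) ℝ)) (1 + g₂ • (allOnes K - 1)))

/-- Quadratic form of the NPA Gram matrix on a block vector. -/
theorem npaGram_quadform (K : ℕ) (g₁ g₂ g₃ a : ℝ) (x y : Fin K → ℝ) :
    (Sum.elim (fun _ => a) (Sum.elim x y)) ⬝ᵥ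
      (npaGram K g₁ g₂ g₃) *ᵥ (Sum.elim (fun _ => a) (Sum.elim x y))
    = a^2 + 2*a*g₁*((∑ i, x i) + (∑ i, y i))
      + ((∑ i, (x i)^2) + g₂ * ((∑ i, x i)^2 - ∑ i, (x i)^2))
      + ((∑ i, (y i)^2) + g₂ * ((∑ i, y i)^2 - ∑ i, (y i)^2))
      + 2*g₃*(∑ i, x i * y i) := by
  simp [npaGram, allOnes, dotProduct, mulVec, Fintype.sum_sum_type,
    Matrix.add_apply, Matrix.smul_apply, Matrix.sub_apply, Matrix.one_apply,
    Finset.mul_sum, Finset.sum_mul, mul_add, add_mul, mul_sub, sub_mul,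
    mul_ite, ite_mul, Finset.sum_add_distrib, Finset.sum_sub_distrib,
    Finset.sum_ite_eq, Finset.sum_ite_eq', sq, mul_comm, mul_left_comm]
  ring_nf
  simp only [← Finset.sum_mul]
  ring

/-- The key linear-programming inequality. -/
theorem npa_keyineq (K : ℕ) (hK2 : 2 ≤ K) (hK7 : K ≤ 7) (r g₁ g₂ g₃ : ℝ)
    (hr : r^2 = K) (hrpos : 0 < r)
    (h1 : 0 ≤ (K:ℝ) - 2*K*r*g₁ + K/2 + K*(K-1)/2*g₂ + K/2*g₃)
    (h2 : 0 ≤ 4 - 4*g₂ - 4*g₃)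
    (h3 : 0 ≤ 2*(K:ℝ) + 2*K*(K-1)*g₂ - 2*K*g₃) :
    2*(K:ℝ)*g₁ + K*g₃ ≤ K + 2*r := by
  have hKpos : (0:ℝ) < K := by positivity
  have hq : ((K:ℝ)-2)^2 ≤ 4*K := by
    have : ((K:ℝ) ≤ 7) := by exact_mod_cast hK7
    have h2' : (2:ℝ) ≤ K := by exact_mod_cast hK2
    nlinarith
  have h2r : (K:ℝ) - 2 ≤ 2*r := by nlinarith [hq, hr, hrpos]
  have h2' : (0:ℝ) ≤ 1 - g₂ - g₃ := by linarith
  have hc2 : (2:ℝ) ≤ K := by exact_mod_cast hK2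
  have h3' : (0:ℝ) ≤ 1 + ((K:ℝ)-1)*g₂ - g₃ := by nlinarith [h3, hKpos]
  have c2 : (0:ℝ) ≤ ((K:ℝ)-1)*(r+1) := by nlinarith [hrpos]
  have c3 : (0:ℝ) ≤ r + 1 - (K:ℝ)/2 := by linarith
  have e : r*((K:ℝ) + 2*r - (2*K*g₁ + K*g₃)) =
      ((K:ℝ) - 2*K*r*g₁ + K/2 + K*(K-1)/2*g₂ + K/2*g₃)
      + (((K:ℝ)-1)*(r+1)) * (1 - g₂ - g₃)
      + (r + 1 - (K:ℝ)/2) * (1 + ((K:ℝ)-1)*g₂ - g₃) := by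
    linear_combination 2*hr
  have big : 0 ≤ r*((K:ℝ) + 2*r - (2*K*g₁ + K*g₃)) := by
    rw [e]
    have := mul_nonneg c2 h2'
    have := mul_nonneg c3 h3'
    linarith
  nlinarith [big, hrpos]

/-- For `2 ≤ K ≤ 7`, the supremum of `2K g₁ + K g₃` over all
`(g₁,g₂,g₃) ∈ ℝ³` with `G(g₁,g₂,g₃)` positive semidefinite equals `K + 2√K`;
hence the level-1 NPA value of the Clifford no-cloning game is `1/2 + 1/(2√K)`
for these `K`. -/
theorem stmt17 (K : ℕ) (hK2 : 2 ≤ K) (hK7 : K ≤ 7) :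
    sSup {x : ℝ | ∃ g₁ g₂ g₃ : ℝ, (npaGram K g₁ g₂ g₃).PosSemidef ∧
        x = 2 * K * g₁ + K * g₃}
      = K + 2 * Real.sqrt K := by
  have hKpos : (0:ℝ) < K := by
    have : (2:ℝ) ≤ K := by exact_mod_cast hK2
    linarith
  set r := Real.sqrt K with hrdef
  have hr : r ^ 2 = K := Real.sq_sqrt (le_of_lt hKpos)
  have hrpos : 0 < r := Real.sqrt_pos.mpr hKpos
  set S := {x : ℝ | ∃ g₁ g₂ g₃ : ℝ, (npaGram K g₁ g₂ g₃).PosSemidef ∧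
      x = 2 * K * g₁ + K * g₃} with hS
  -- membership of the optimal value
  have hpsd : (npaGram K r⁻¹ 0 1).PosSemidef := by
    set B : Matrix (Unit ⊕ (Fin K ⊕ Fin K)) (Fin K) ℝ :=
      Matrix.of (Sum.elim (fun _ _ => r⁻¹)
        (Sum.elim (fun i j => if i = j then 1 else 0) (fun i j => if i = j then 1 else 0)))
      with hB
    have key : npaGram K r⁻¹ 0 1 = B * Bᵀ := by
      ext i j
      have hsq : r⁻¹ * r⁻¹ * K = 1 := by
        field_simp
        nlinarith [hr]
      rcases i with i | (i | i) <;> rcases j with j | (j | j) <;>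
        simp [npaGram, allOnes, hB, Matrix.mul_apply, Matrix.one_apply, Finset.sum_ite_eq,
          Finset.sum_ite_eq', mul_ite, ite_mul, eq_comm] <;>
        try nlinarith [hr, hsq]
    rw [key]
    simpa using Matrix.posSemidef_conjTranspose_mul_self Bᵀ
  have hmem : ((K:ℝ) + 2*r) ∈ S := by
    refine ⟨r⁻¹, 0, 1, hpsd, ?_⟩
    have : (K:ℝ) * r⁻¹ = r := by
      field_simp
      nlinarith [hr]
    push_cast
    rw [mul_assoc, this]
    ring
  -- upper bound
  have hub : ∀ x ∈ S, x ≤ (K:ℝ) + 2*r := by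
    rintro x ⟨g₁, g₂, g₃, hG, rfl⟩
    -- vector 1 : (-r, 1/2, ..., 1/2)
    have h1 := hG.dotProduct_mulVec_nonneg (Sum.elim (fun _ => -r) (Sum.elim (fun _ => (1/2:ℝ)) (fun _ => (1/2:ℝ))))
    have h3 := hG.dotProduct_mulVec_nonneg (Sum.elim (fun _ => (0:ℝ)) (Sum.elim (fun _ => (1:ℝ)) (fun _ => (-1:ℝ))))
    rw [show (star (Sum.elim (fun _ => -r) (Sum.elim (fun _ => (1/2:ℝ)) (fun _ => (1/2:ℝ))))
        : Unit ⊕ (Fin K ⊕ Fin K) → ℝ)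
        = Sum.elim (fun _ => -r) (Sum.elim (fun _ => (1/2:ℝ)) (fun _ => (1/2:ℝ))) from rfl,
      npaGram_quadform] at h1
    rw [show (star (Sum.elim (fun _ => (0:ℝ)) (Sum.elim (fun _ => (1:ℝ)) (fun _ => (-1:ℝ))))
        : Unit ⊕ (Fin K ⊕ Fin K) → ℝ)
        = Sum.elim (fun _ => (0:ℝ)) (Sum.elim (fun _ => (1:ℝ)) (fun _ => (-1:ℝ))) from rfl,
      npaGram_quadform] at h3
    simp [Finset.sum_const, Fintype.card_fin] at h1 h3
    -- indicator vector for the (1,-1,0,...,0) direction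
    have hK0 : 0 < K := by omega
    have hK1 : 1 < K := by omega
    set i0 : Fin K := ⟨0, hK0⟩ with hi0
    set i1 : Fin K := ⟨1, hK1⟩ with hi1
    have hne : i0 ≠ i1 := by simp [hi0, hi1, Fin.ext_iff]
    set xv : Fin K → ℝ := fun i => if i = i0 then 1 else if i = i1 then -1 else 0 with hxv
    have hx : ∀ i, xv i = (if i = i0 then (1:ℝ) else 0) + (if i = i1 then (-1:ℝ) else 0) := by
      intro i
      simp only [hxv]
      by_cases hi : i = i0
      · simp [hi, hne]
      · by_cases hj : i = i1 <;> simp [hi, hj, Ne.symm hne]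
    have hx2 : ∀ i, xv i ^ 2 = (if i = i0 then (1:ℝ) else 0) + (if i = i1 then (1:ℝ) else 0) := by
      intro i
      simp only [hxv]
      by_cases hi : i = i0
      · simp [hi, hne]
      · by_cases hj : i = i1 <;> simp [hi, hj, Ne.symm hne]
    have hsx : ∑ i, xv i = 0 := by
      simp only [hx, Finset.sum_add_distrib, Finset.sum_ite_eq', Finset.mem_univ, if_true]
      norm_num
    have hsx2 : ∑ i, xv i ^ 2 = 2 := by
      simp only [hx2, Finset.sum_add_distrib, Finset.sum_ite_eq', Finset.mem_univ, if_true]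
      norm_num
    have h2 := hG.dotProduct_mulVec_nonneg (Sum.elim (fun _ => (0:ℝ)) (Sum.elim xv (fun i => -xv i)))
    rw [show (star (Sum.elim (fun _ => (0:ℝ)) (Sum.elim xv (fun i => -xv i)))
        : Unit ⊕ (Fin K ⊕ Fin K) → ℝ)
        = Sum.elim (fun _ => (0:ℝ)) (Sum.elim xv (fun i => -xv i)) from rfl,
      npaGram_quadform] at h2
    have hxy : ∑ i, xv i * (-xv i) = -2 := by
      have : ∀ i, xv i * (-xv i) = -(xv i ^ 2) := by intro i; ring
      simp only [this, Finset.sum_neg_distrib, hsx2]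
    have hsnx2 : ∑ i, (-xv i)^2 = 2 := by
      simp only [neg_sq]; exact hsx2
    simp only [Finset.sum_neg_distrib, hsx, hsx2, hsnx2, neg_zero, hxy] at h2
    ring_nf at h2
    -- now apply the key inequality
    have h1' : 0 ≤ (K:ℝ) - 2*K*r*g₁ + K/2 + K*(K-1)/2*g₂ + K/2*g₃ := by nlinarith [h1, hr]
    have h2' : 0 ≤ 4 - 4*g₂ - 4*g₃ := by nlinarith [h2]
    have h3' : 0 ≤ 2*(K:ℝ) + 2*K*(K-1)*g₂ - 2*K*g₃ := by nlinarith [h3]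
    have := npa_keyineq K hK2 hK7 r g₁ g₂ g₃ hr hrpos h1' h2' h3'
    linarith
  exact le_antisymm (csSup_le ⟨_, hmem⟩ hub) (le_csSup ⟨_, hub⟩ hmem)
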